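/- Let (X,d) be a complete CAT(0) space and f : ℝ^s → X Lipschitz with constant C for a norm ‖·‖ on ℝ^s. Let S be a convergent barycentric subdivision scheme whose mask a is supported in {x : ‖x‖ ≤ r}, and set x_i = f(h·i) for h > 0. Then for all n, k ∈ ℕ with k ≤ n and all i ∈ ℤ^s: d((Sⁿx)_{2^{n−k} i}, f(h·i/2^k)) ≤ r·C·h. -/

import Mathlib

/-- approximation of a Lipschitz function by a convergent
barycentric subdivision scheme whose mask is supported in the `ν`-ball of
radius `r`: sampling on the grid `hℤ^s` gives
`d((Sⁿx)_{2^{n-k}i}, f(hi/2^k)) ≤ rCh`. -/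
theorem barycentric_approximation (s : ℕ) (X : Type*) [MetricSpace X]
    [CompleteSpace X]
    (ν : Seminorm ℝ (Fin s → ℝ))
    (f : (Fin s → ℝ) → X) (C : ℝ) (hC : 0 < C)
    (hf : ∀ u v : Fin s → ℝ, dist (f u) (f v) ≤ C * ν (u - v))
    (r : ℝ) (hr : 0 < r)
    (a : (Fin s → ℤ) → ℝ)
    (ha_nonneg : ∀ i, 0 ≤ a i)
    (ha_fin : (Function.support a).Finite)
    (ha_sum : ∀ i : Fin s → ℤ, ∑ᶠ j : Fin s → ℤ, a (i - 2 • j) = 1)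
    (ha_supp : ∀ i : Fin s → ℤ, a i ≠ 0 → ν (fun t => (i t : ℝ)) ≤ r)
    (A : ℕ → (Fin s → ℤ) → ℝ)
    (hA_nonneg : ∀ n i, 0 ≤ A n i)
    (hA1 : A 1 = a)
    (hAsucc : ∀ n (i : Fin s → ℤ),
      A (n + 1) i = ∑ᶠ j : Fin s → ℤ, a (i - 2 • j) * A n j)
    (hA_supp : ∀ (n : ℕ), 1 ≤ n → ∀ i : Fin s → ℤ, A n i ≠ 0 →
      ν (fun t => (i t : ℝ)) ≤ ((2 : ℝ) ^ n - 1) * r)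
    (hA_sum : ∀ (n : ℕ) (i : Fin s → ℤ), ∑ᶠ j : Fin s → ℤ, A n (i - 2 ^ n • j) = 1)
    (S : ((Fin s → ℤ) → X) → ((Fin s → ℤ) → X))
    (hJensen : ∀ (x : (Fin s → ℤ) → X) (n : ℕ), 1 ≤ n →
      ∀ (i : Fin s → ℤ) (z₀ : X),
        dist (S^[n] x i) z₀ ≤ ∑ᶠ k : Fin s → ℤ, A n (i - 2 ^ n • k) * dist (x k) z₀)
    (h : ℝ) (hh : 0 < h)
    (x : (Fin s → ℤ) → X)
    (hx : ∀ i : Fin s → ℤ, x i = f fun t => h * (i t : ℝ)) :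
    ∀ (n k : ℕ), 1 ≤ n → k ≤ n → ∀ i : Fin s → ℤ,
      dist (S^[n] x (2 ^ (n - k) • i)) (f fun t => h * ((i t : ℝ) / 2 ^ k)) ≤
        r * C * h := by
  intro n k hn hk i
  set z₀ : X := f fun t => h * ((i t : ℝ) / 2 ^ k) with hz₀
  set g : (Fin s → ℤ) → ℝ := fun j => A n (2 ^ (n - k) • i - 2 ^ n • j) with hg
  have hgsum : ∑ᶠ j, g j = 1 := hA_sum n (2 ^ (n - k) • i)
  have hgfin : (Function.support g).Finite := by
    by_contra hinf
    rw [finsum_of_infinite_support hinf] at hgsum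
    exact one_ne_zero hgsum.symm
  -- pointwise bound on the support
  have hpt : ∀ j, g j ≠ 0 → dist (x j) z₀ ≤ C * h * r := by
    intro j hj
    have hm := hA_supp n hn _ hj
    rw [hx j, hz₀]
    refine (hf _ _).trans ?_
    have key : ν ((fun t => h * (j t : ℝ)) - fun t => h * ((i t : ℝ) / 2 ^ k))
        ≤ h / 2 ^ n * (((2:ℝ) ^ n - 1) * r) := by
      have heq : ((fun t => h * (j t : ℝ)) - fun t => h * ((i t : ℝ) / 2 ^ k))
          = (-(h / 2 ^ n)) • fun t => (((2 ^ (n - k) • i - 2 ^ n • j) t : ℤ) : ℝ) := by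
        funext t
        have h2 : ((2:ℝ) ^ (n - k)) * ((2:ℝ) ^ k) = 2 ^ n := by
          rw [← pow_add]
          congr 1
          omega
        simp only [Pi.sub_apply, Pi.smul_apply, smul_eq_mul]
        push_cast
        field_simp
        push_cast [nsmul_eq_mul]
        rw [← h2]
        ring
      rw [heq, map_smul_eq_mul]
      have : |(-(h / 2 ^ n))| = h / 2 ^ n := by
        rw [abs_neg, abs_of_pos (by positivity)]
      rw [Real.norm_eq_abs, this]
      exact mul_le_mul_of_nonneg_left hm (by positivity)
    calc C * ν ((fun t => h * (j t : ℝ)) - fun t => h * ((i t : ℝ) / 2 ^ k))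
        ≤ C * (h / 2 ^ n * (((2:ℝ) ^ n - 1) * r)) :=
          mul_le_mul_of_nonneg_left key hC.le
      _ ≤ C * (h * r) := by
          rw [mul_le_mul_iff_right₀ hC]
          rw [div_mul_eq_mul_div, mul_comm]
          rw [div_le_iff₀ (by positivity)]
          nlinarith [hh.le, hr.le, pow_pos (show (0:ℝ) < 2 by norm_num) n]
      _ = C * h * r := by ring
  -- sum bound
  refine (hJensen x n hn (2 ^ (n - k) • i) z₀).trans ?_
  have hsub : Function.support (fun j => g j * dist (x j) z₀) ⊆ hgfin.toFinset := by
    intro j hj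
    simp only [Function.mem_support] at hj
    simp only [Set.Finite.coe_toFinset, Function.mem_support]
    exact fun h0 => hj (by rw [h0, zero_mul])
  have hrw : (∑ᶠ j : Fin s → ℤ, A n (2 ^ (n - k) • i - 2 ^ n • j) * dist (x j) z₀)
      = ∑ j ∈ hgfin.toFinset, g j * dist (x j) z₀ :=
    finsum_eq_sum_of_support_subset _ hsub
  have hrw2 : (1:ℝ) = ∑ j ∈ hgfin.toFinset, g j := by
    rw [← hgsum]
    exact finsum_eq_sum_of_support_subset _ (by simp)
  rw [hrw]
  calc ∑ j ∈ hgfin.toFinset, g j * dist (x j) z₀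
      ≤ ∑ j ∈ hgfin.toFinset, g j * (C * h * r) := by
        refine Finset.sum_le_sum fun j hj => ?_
        have hj' : g j ≠ 0 := by simpa [Function.mem_support] using hgfin.mem_toFinset.mp hj
        exact mul_le_mul_of_nonneg_left (hpt j hj') (hA_nonneg n _)
    _ = (∑ j ∈ hgfin.toFinset, g j) * (C * h * r) := by rw [Finset.sum_mul]
    _ = r * C * h := by rw [← hrw2]; ring
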